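/- Let (H, ⟨·,·⟩) be a real Hilbert space with norm ‖·‖ and let D ⊆ H be a dense linear subspace. Let q : D × D → ℝ be a symmetric bilinear form such that: (a) q is semi-bounded from below, i.e. there exists c ∈ ℝ with q(u,u) ≥ c‖u‖² for all u ∈ D; (b) there exist a nondecreasing sequence of real numbers (ν_i)_{i≥1} and an orthonormal Hilbert basis (g_i)_{i≥1} of H with g_i ∈ D and q(g_i, v) = ν_i ⟨g_i, v⟩ for all i ≥ 1 and all v ∈ D. Let N ≥ 1 and m ≥ 1 be integers and let F ⊆ D be an m-dimensional linear subspace. Assume there exist positive constants γ and δ such that: (H1) 0 < δ < γ/√2; (H2) |ν_{N+i−1}| ≤ γ for all i ∈ {1,…,m}, ν_{N+m} ≥ γ, and, if N ≥ 2, ν_{N−1} ≤ −γ; (H3) |q(φ, g)| ≤ δ ‖φ‖ ‖g‖ for all g ∈ D and all φ ∈ F. Let Π_N denote the orthogonal projection of H onto the closed subspace spanned by {g_N, …, g_{N+m−1}}. Then ‖Π_N φ − φ‖ ≤ (√2 δ/γ) ‖φ‖ for every φ ∈ F. -/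

import Mathlib

open Real

/-- Abstract eigenvalue-approximation lemma (Proposition 3.4(ii)): under the same
assumptions as in Proposition 3.4(i), the orthogonal projection `Π_N` of `H` onto the
subspace spanned by `g_N, …, g_{N+m−1}` (characterized by `Π_N φ ∈ K` and
`φ − Π_N φ ⟂ K`) satisfies `‖Π_N φ − φ‖ ≤ (√2 δ/γ)‖φ‖` for every `φ ∈ F`. -/
theorem stmt1
    {H : Type*} [NormedAddCommGroup H] [InnerProductSpace ℝ H] [CompleteSpace H]
    (D : Submodule ℝ H) (hdense : Dense (D : Set H))
    (q : D →ₗ[ℝ] D →ₗ[ℝ] ℝ)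
    (hsymm : ∀ u v : D, q u v = q v u)
    (hsb : ∃ c : ℝ, ∀ u : D, c * ‖(u : H)‖ ^ 2 ≤ q u u)
    (ν : ℕ → ℝ) (hν : ∀ i j : ℕ, 1 ≤ i → i ≤ j → ν i ≤ ν j)
    (g : ℕ → D)
    (hg_orth : Orthonormal ℝ (fun i : ℕ => ((g (i + 1) : H))))
    (hg_tot :
      (Submodule.span ℝ (Set.range (fun i : ℕ => ((g (i + 1) : H))))).topologicalClosure = ⊤)
    (hg_eig : ∀ i : ℕ, 1 ≤ i → ∀ v : D,
      q (g i) v = ν i * (inner ℝ ((g i : H)) ((v : H)) : ℝ))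
    (N m : ℕ) (hN : 1 ≤ N) (hm : 1 ≤ m)
    (F : Submodule ℝ D) (hdim : Module.finrank ℝ F = m)
    (γ δ : ℝ) (hγ : 0 < γ) (hδ : 0 < δ) (hδγ : δ < γ / Real.sqrt 2)
    (hH2a : ∀ i : ℕ, 1 ≤ i → i ≤ m → |ν (N + i - 1)| ≤ γ)
    (hH2b : γ ≤ ν (N + m))
    (hH2c : 2 ≤ N → ν (N - 1) ≤ -γ)
    (hH3 : ∀ (w : D) (φ : F), |q (φ : D) w| ≤ δ * ‖((φ : D) : H)‖ * ‖(w : H)‖) :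
    ∀ φ : F, ∀ p : H,
      p ∈ Submodule.span ℝ (Set.range (fun i : Fin m => ((g (N + (i : ℕ)) : H)))) →
      (∀ y ∈ Submodule.span ℝ (Set.range (fun i : Fin m => ((g (N + (i : ℕ)) : H)))),
        (inner ℝ (((φ : D) : H) - p) y : ℝ) = 0) →
      ‖p - ((φ : D) : H)‖ ≤ Real.sqrt 2 * δ / γ * ‖((φ : D) : H)‖ := by
  obtain ⟨K, rfl⟩ : ∃ K, N = K + 1 := ⟨N - 1, (Nat.succ_pred_eq_of_pos hN).symm⟩
  intro φ p hp hperp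
  set e : ℕ → H := fun i => ((g (i + 1) : H)) with he
  set φH : H := ((φ : D) : H) with hφH
  set x : H := φH - p with hx
  set a : ℕ → ℝ := fun i => (inner ℝ (e i) φH : ℝ) with ha
  -- membership of basis vectors in the span
  have hmem : ∀ j : Fin m, (g (K + 1 + (j : ℕ)) : H) ∈
      Submodule.span ℝ (Set.range (fun i : Fin m => ((g (K + 1 + (i : ℕ)) : H)))) :=
    fun j => Submodule.subset_span ⟨j, rfl⟩
  -- Step A : for i in the window, ⟪e i, x⟫ = 0
  have hA : ∀ i : ℕ, K ≤ i → i < K + m → (inner ℝ (e i) x : ℝ) = 0 := by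
    intro i hKi him
    have hj : i - K < m := by omega
    have key := hperp _ (hmem ⟨i - K, hj⟩)
    have hik : K + 1 + ((⟨i - K, hj⟩ : Fin m) : ℕ) = i + 1 := by
      simp only [Fin.val_mk]; omega
    rw [hik] at key
    rw [real_inner_comm]
    exact key
  -- coefficients of p
  obtain ⟨c, hc⟩ := (Submodule.mem_span_range_iff_exists_fun ℝ).mp hp
  -- Step B : for i outside the window, ⟪e i, p⟫ = 0, hence ⟪e i, x⟫ = a i
  have hB : ∀ i : ℕ, ¬(K ≤ i ∧ i < K + m) → (inner ℝ (e i) x : ℝ) = a i := by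
    intro i hi
    have hip : (inner ℝ (e i) p : ℝ) = 0 := by
      rw [← hc, inner_sum]
      refine Finset.sum_eq_zero fun j _ => ?_
      obtain ⟨jn, hjn⟩ := j
      simp only [Fin.val_mk]
      rw [inner_smul_right]
      have h1 : (g (K + 1 + jn) : H) = e (K + jn) := by
        simp only [he]
        rw [show K + 1 + jn = K + jn + 1 from by omega]
      rw [h1]
      have hne : i ≠ K + jn := by omega
      rw [hg_orth.2 hne, mul_zero]
    simp only [hx, inner_sub_right, hip, sub_zero, ha]
  -- Step C : eigenvalue lower bound outside the window
  have hC : ∀ i : ℕ, ¬(K ≤ i ∧ i < K + m) → γ ≤ |ν (i + 1)| := by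
    intro i hi
    rcases lt_or_ge i K with hlt | hge
    · -- i + 1 ≤ K, so ν (i+1) ≤ ν K ≤ -γ
      have hK1 : 1 ≤ K := by omega
      have h2 : ν (i + 1) ≤ ν K := hν (i + 1) K (by omega) (by omega)
      have h3 : ν K ≤ -γ := by
        have := hH2c (by omega)
        simpa using this
      have : ν (i + 1) ≤ -γ := le_trans h2 h3
      calc γ ≤ -ν (i + 1) := by linarith
        _ ≤ |ν (i + 1)| := neg_le_abs _
    · have hge2 : K + 1 + m ≤ i + 1 := by omega
      have h2 : ν (K + 1 + m) ≤ ν (i + 1) := hν _ _ (by omega) hge2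
      calc γ ≤ ν (i + 1) := le_trans hH2b h2
        _ ≤ |ν (i + 1)| := le_abs_self _
  -- the auxiliary sequence b
  set b : ℕ → ℝ := fun i => if K ≤ i ∧ i < K + m then 0 else ν (i + 1) * a i with hb
  have hφnn : (0 : ℝ) ≤ δ * ‖φH‖ := mul_nonneg hδ.le (norm_nonneg _)
  -- Step D : all finite partial sums of b² are bounded by (δ‖φ‖)²
  have hD : ∀ s : Finset ℕ, ∑ i ∈ s, (b i) ^ 2 ≤ (δ * ‖φH‖) ^ 2 := by
    intro s
    set w : D := ∑ i ∈ s, b i • g (i + 1) with hw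
    set T : ℝ := ∑ i ∈ s, (b i) ^ 2 with hT
    have hTnn : 0 ≤ T := Finset.sum_nonneg fun i _ => sq_nonneg _
    -- q φ w = T
    have hq : q (φ : D) w = T := by
      rw [hw, map_sum]
      simp only [map_smul, smul_eq_mul]
      refine Finset.sum_congr rfl fun i _ => ?_
      rw [hsymm, hg_eig (i + 1) (by omega) (φ : D)]
      by_cases hi : K ≤ i ∧ i < K + m
      · simp [hb, hi]
      · simp only [hb, hi, if_false, ha, he]
        ring
    -- ‖w‖² = T
    have hwnorm : ‖(w : H)‖ ^ 2 = T := by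
      have hcoe : ((w : H)) = ∑ i ∈ s, b i • e i := by
        simp [hw, he]
      have := hg_orth.inner_sum b b s
      simp only [RCLike.star_def, starRingEnd_apply, star_trivial] at this
      rw [← real_inner_self_eq_norm_sq, hcoe]
      simp only [he] at this
      rw [this, hT]
      exact Finset.sum_congr rfl fun i _ => (sq (b i)).symm
    have h3 := hH3 w φ
    rw [hq] at h3
    have h4 : T ≤ δ * ‖φH‖ * ‖(w : H)‖ := le_trans (le_abs_self _) h3
    nlinarith [sq_nonneg (‖(w : H)‖ - δ * ‖φH‖), norm_nonneg ((w : H))]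
  have hbsummable : Summable fun i => (b i) ^ 2 :=
    summable_of_sum_le (fun i => sq_nonneg _) hD
  have hbtsum : ∑' i, (b i) ^ 2 ≤ (δ * ‖φH‖) ^ 2 :=
    Summable.tsum_le_of_sum_le hbsummable hD
  -- the Hilbert basis
  let B : HilbertBasis ℕ ℝ H := HilbertBasis.mk hg_orth (by rw [hg_tot])
  have hBe : ∀ i, B i = e i := fun i =>
    congrFun (HilbertBasis.coe_mk hg_orth _) i
  -- Step F : ∑' ⟪e i, x⟫² = ‖x‖²
  have hfsummable : Summable fun i : ℕ => (inner ℝ (e i) x : ℝ) ^ 2 := by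
    have := B.summable_inner_mul_inner x x
    refine this.congr fun i => ?_
    rw [hBe, real_inner_comm x (e i), sq]
  have hftsum : ∑' i : ℕ, (inner ℝ (e i) x : ℝ) ^ 2 = ‖x‖ ^ 2 := by
    have := B.tsum_inner_mul_inner x x
    rw [← real_inner_self_eq_norm_sq, ← this]
    refine tsum_congr fun i => ?_
    rw [hBe, real_inner_comm x (e i), sq]
  -- Step G : pointwise comparison
  have hG : ∀ i : ℕ, (inner ℝ (e i) x : ℝ) ^ 2 ≤ (1 / γ ^ 2) * (b i) ^ 2 := by
    intro i
    by_cases hi : K ≤ i ∧ i < K + m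
    · rw [hA i hi.1 hi.2]
      have h0 : (0 : ℝ) ^ 2 = 0 := by norm_num
      rw [h0]
      positivity
    · rw [hB i hi]
      have hγν := hC i hi
      have h1 : γ ^ 2 ≤ (ν (i + 1)) ^ 2 := by
        have := pow_le_pow_left₀ hγ.le hγν 2
        rwa [sq_abs] at this
      have hb2 : (b i) ^ 2 = (ν (i + 1)) ^ 2 * (a i) ^ 2 := by
        simp only [hb, hi, if_false]; ring
      rw [hb2]
      rw [div_mul_eq_mul_div, one_mul, le_div_iff₀ (by positivity)]
      calc (a i) ^ 2 * γ ^ 2 = γ ^ 2 * (a i) ^ 2 := by ring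
        _ ≤ (ν (i + 1)) ^ 2 * (a i) ^ 2 :=
          mul_le_mul_of_nonneg_right h1 (sq_nonneg _)
  -- combine
  have hxsq : ‖x‖ ^ 2 ≤ (δ / γ * ‖φH‖) ^ 2 := by
    have h1 : ∑' i : ℕ, (inner ℝ (e i) x : ℝ) ^ 2 ≤ ∑' i, (1 / γ ^ 2) * (b i) ^ 2 :=
      Summable.tsum_le_tsum hG hfsummable (hbsummable.mul_left _)
    rw [hftsum, tsum_mul_left] at h1
    have h2 : (1 / γ ^ 2) * ∑' i, (b i) ^ 2 ≤ (1 / γ ^ 2) * (δ * ‖φH‖) ^ 2 :=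
      mul_le_mul_of_nonneg_left hbtsum (by positivity)
    calc ‖x‖ ^ 2 ≤ (1 / γ ^ 2) * (δ * ‖φH‖) ^ 2 := le_trans h1 h2
      _ = (δ / γ * ‖φH‖) ^ 2 := by field_simp
  have hxle : ‖x‖ ≤ δ / γ * ‖φH‖ := by
    have hrhs : 0 ≤ δ / γ * ‖φH‖ := by positivity
    nlinarith [norm_nonneg x]
  have hs2 : (1 : ℝ) ≤ Real.sqrt 2 := by
    rw [show (1 : ℝ) = Real.sqrt 1 by simp]
    exact Real.sqrt_le_sqrt (by norm_num)
  have : ‖p - φH‖ = ‖x‖ := by rw [hx, norm_sub_rev]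
  rw [this]
  calc ‖x‖ ≤ δ / γ * ‖φH‖ := hxle
    _ ≤ Real.sqrt 2 * δ / γ * ‖φH‖ := by
      apply mul_le_mul_of_nonneg_right _ (norm_nonneg _)
      rw [div_le_div_iff₀ hγ hγ]
      nlinarith [mul_nonneg (mul_nonneg (sub_nonneg.mpr hs2) hδ.le) hγ.le]
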